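/- arXiv:1704.08358 — 4 statements merged into one kernel-verified Lean document; each statement's English description precedes it below -/
import Mathlib

section
/- Let p≥3 be prime and k∈ℕ. Then i^k·x_k(r;p) lies in the cyclotomic field ℚ(ζ_p). More precisely, if k is even then x_k(r;p) ∈ ℚ(ζ_p)^+ (the maximal real subfield), and if k is odd then x_k(r;p) ∈ ℚ(ζ_{4p})^+. -/
open scoped Real
open Complex Polynomial


private lemma cheb (K : IntermediateField ℚ ℂ) (z : ℂ) (h1 : z * z⁻¹ = 1)
    (h : z + z⁻¹ ∈ K) : ∀ n : ℕ, z ^ n + (z⁻¹) ^ n ∈ K := by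
  have key : ∀ n : ℕ, z ^ n + (z⁻¹) ^ n ∈ K ∧ z ^ (n+1) + (z⁻¹) ^ (n+1) ∈ K := by
    intro n
    induction n with
    | zero =>
      constructor
      · simpa using K.add_mem K.one_mem K.one_mem
      · simpa using h
    | succ n ih =>
      refine ⟨ih.2, ?_⟩
      have hrec : z ^ (n+2) + (z⁻¹) ^ (n+2)
          = (z ^ (n+1) + (z⁻¹)^(n+1)) * (z + z⁻¹) - (z ^ n + (z⁻¹)^n) := by
        linear_combination (-(z ^ n) - z⁻¹ ^ n) * h1
      rw [hrec]
      exact K.sub_mem (K.mul_mem ih.2 h) ih.1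
  exact fun n => (key n).1

private lemma real_mem (w z : ℂ) (hw0 : w ≠ 0) (hwi : IsIntegral ℚ w)
    (hwc : (starRingEnd ℂ) w = w⁻¹)
    (hz : z ∈ IntermediateField.adjoin ℚ {w})
    (hzc : (starRingEnd ℂ) z = z) :
    z ∈ IntermediateField.adjoin ℚ {w + w⁻¹} := by
  have hw1 : w * w⁻¹ = 1 := mul_inv_cancel₀ hw0
  set K := IntermediateField.adjoin ℚ {w + w⁻¹} with hK
  have hmem : w + w⁻¹ ∈ K := IntermediateField.mem_adjoin_simple_self ℚ _
  have hz' : z ∈ Algebra.adjoin ℚ {w} := by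
    rw [← IntermediateField.adjoin_simple_toSubalgebra_of_isAlgebraic hwi.isAlgebraic]
    exact hz
  rw [Algebra.adjoin_singleton_eq_range_aeval] at hz'
  obtain ⟨f, hf⟩ := hz'
  have hf' : Polynomial.aeval w f = z := hf
  have hstep : (starRingEnd ℂ) (Polynomial.aeval w f) = Polynomial.aeval w⁻¹ f := by
    have h := Polynomial.aeval_algHom_apply ((Complex.conjAe.toAlgHom).restrictScalars ℚ) w f
    simp only [AlgHom.coe_restrictScalars', AlgEquiv.toAlgHom_eq_coe, AlgHom.coe_coe,
      Complex.conjAe_coe] at h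
    change (Polynomial.aeval ((starRingEnd ℂ) w)) f = (starRingEnd ℂ) ((Polynomial.aeval w) f) at h
    rw [hwc] at h
    exact h.symm
  have hconj : z = Polynomial.aeval w⁻¹ f := by
    rw [← hzc, ← hf', hstep]
  have hsum : Polynomial.aeval w f + Polynomial.aeval w⁻¹ f ∈ K := by
    rw [Polynomial.aeval_eq_sum_range, Polynomial.aeval_eq_sum_range, ← Finset.sum_add_distrib]
    refine sum_mem fun i _ => ?_
    rw [← smul_add, Rat.smul_def]
    exact K.mul_mem (by simpa using K.algebraMap_mem (f.coeff i)) (cheb K w hw1 hmem i)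
  have h2 : z = (2:ℂ)⁻¹ * (Polynomial.aeval w f + Polynomial.aeval w⁻¹ f) := by
    rw [hf', ← hconj]; ring
  rw [h2]
  refine K.mul_mem (K.inv_mem ?_) hsum
  have h3 : ((2:ℚ):ℂ) ∈ K := K.algebraMap_mem (2:ℚ)
  simpa using h3

private lemma cot_formula (v p : ℕ) (hv : 0 < v) (hvp : v < p) :
    (Real.cot (π * v / p) : ℂ) =
      Complex.I * (Complex.exp (2 * π * Complex.I * v / p) + 1) /
        (Complex.exp (2 * π * Complex.I * v / p) - 1) := by
  have hp0 : (0:ℝ) < p := by exact_mod_cast hv.trans hvp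
  have hv0 : (0:ℝ) < v := by exact_mod_cast hv
  have hpC : (p:ℂ) ≠ 0 := by exact_mod_cast hp0.ne'
  set θ : ℝ := π * v / p with hθ
  have hθ0 : 0 < θ := by
    exact div_pos (mul_pos Real.pi_pos hv0) hp0
  have hθπ : θ < π := by
    rw [hθ, div_lt_iff₀ hp0]
    have : (v:ℝ) < p := by exact_mod_cast hvp
    nlinarith [Real.pi_pos]
  have hs : Real.sin θ ≠ 0 := ne_of_gt (Real.sin_pos_of_pos_of_lt_pi hθ0 hθπ)
  set w : ℂ := Complex.exp (θ * Complex.I) with hw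
  have hw0 : w ≠ 0 := Complex.exp_ne_zero _
  have hsin : Complex.sin θ = (w⁻¹ - w) * Complex.I / 2 := by
    rw [Complex.sin, hw, ← Complex.exp_neg]
    ring_nf
  have hcos : Complex.cos θ = (w + w⁻¹) / 2 := by
    rw [Complex.cos, hw, ← Complex.exp_neg]
    ring_nf
  have hsin0 : Complex.sin θ ≠ 0 := by
    rw [← Complex.ofReal_sin]
    exact_mod_cast hs
  have hw2 : w ^ 2 ≠ 1 := by
    intro hcon
    apply hsin0
    have hinv : w⁻¹ = w := by
      rw [inv_eq_one_div, eq_comm, eq_div_iff hw0, ← pow_two, hcon]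
    rw [hsin, hinv]
    ring
  have hw21 : w ^ 2 - 1 ≠ 0 := sub_ne_zero_of_ne hw2
  have hexp : Complex.exp (2 * π * Complex.I * v / p) = w ^ 2 := by
    rw [hw, ← Complex.exp_nat_mul]
    congr 1
    push_cast [hθ]
    field_simp
  rw [Complex.ofReal_cot, Complex.cot, hexp, hsin, hcos]
  have hden : (w⁻¹ - w) * Complex.I / 2 ≠ 0 := by rw [← hsin]; exact hsin0
  rw [div_eq_div_iff hden hw21]
  field_simp
  linear_combination (w^4 - 1) * Complex.I_sq

noncomputable def xk (k p : ℕ) [NeZero p] (r : ZMod p) : ℝ :=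
  ((p : ℝ))⁻¹ ^ k *
    ∑ m ∈ Finset.univ.filter (fun m : Fin k → (ZMod p)ˣ => ∏ i, ((m i : ZMod p)) = r),
      ∏ i, Real.cot (π * ((m i : ZMod p).val : ℝ) / p)

/-- The `k`-fold divisor function. -/
def dk (k n : ℕ) : ℕ :=
  ((Fintype.piFinset fun _ : Fin k => Finset.range (n + 1)).filter
    (fun f => ∏ i, f i = n)).card

theorem stmt2 (p k : ℕ) [NeZero p] (hp : p.Prime) (hp3 : 3 ≤ p) (r : ℤ) :
    (Complex.I ^ k * (xk k p (r : ZMod p) : ℂ) ∈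
      IntermediateField.adjoin ℚ {Complex.exp (2 * π * Complex.I / p)}) ∧
    (Even k → (xk k p (r : ZMod p) : ℂ) ∈
      IntermediateField.adjoin ℚ
        {Complex.exp (2 * π * Complex.I / p) + (Complex.exp (2 * π * Complex.I / p))⁻¹}) ∧
    (Odd k → (xk k p (r : ZMod p) : ℂ) ∈
      IntermediateField.adjoin ℚ
        {Complex.exp (2 * π * Complex.I / (4 * p)) +
          (Complex.exp (2 * π * Complex.I / (4 * p)))⁻¹}) := by
  have hFact : Fact p.Prime := ⟨hp⟩
  have hpn : p ≠ 0 := hp.ne_zero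
  have hpC : (p:ℂ) ≠ 0 := Nat.cast_ne_zero.mpr hpn
  set ζ : ℂ := Complex.exp (2 * π * Complex.I / p) with hζ
  set ξ : ℂ := Complex.exp (2 * π * Complex.I / (4 * p)) with hξ
  have hζ0 : ζ ≠ 0 := Complex.exp_ne_zero _
  have hξ0 : ξ ≠ 0 := Complex.exp_ne_zero _
  have hζp : ζ ^ p = 1 := by
    rw [hζ, ← Complex.exp_nat_mul, ← Complex.exp_two_pi_mul_I]
    congr 1
    field_simp
  have hξ4p : ξ ^ (4 * p) = 1 := by
    rw [hξ, ← Complex.exp_nat_mul, ← Complex.exp_two_pi_mul_I]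
    congr 1
    push_cast
    field_simp
  have hξp : ξ ^ p = Complex.I := by
    rw [hξ, ← Complex.exp_nat_mul]
    have : (p:ℂ) * (2 * π * Complex.I / (4 * p)) = (π/2 : ℝ) * Complex.I := by
      push_cast
      field_simp
      ring
    rw [this, Complex.exp_mul_I]
    simp
  have hξ4 : ξ ^ 4 = ζ := by
    rw [hξ, hζ, ← Complex.exp_nat_mul]
    congr 1
    push_cast
    field_simp
  -- conjugation facts
  have hconj_exp : ∀ x : ℂ, (starRingEnd ℂ) x = -x → (starRingEnd ℂ) (Complex.exp x) = (Complex.exp x)⁻¹ := by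
    intro x hx
    rw [← Complex.exp_conj, hx, Complex.exp_neg]
  have hζc : (starRingEnd ℂ) ζ = ζ⁻¹ := by
    apply hconj_exp
    simp [map_div₀, Complex.conj_I, map_ofNat]
    ring
  have hξc : (starRingEnd ℂ) ξ = ξ⁻¹ := by
    apply hconj_exp
    simp [map_div₀, Complex.conj_I, map_ofNat]
    ring
  -- integrality
  have hζi : IsIntegral ℚ ζ := by
    refine ⟨X ^ p - C 1, Polynomial.monic_X_pow_sub_C 1 hpn, ?_⟩
    simp [hζp]
  have hξi : IsIntegral ℚ ξ := by
    refine ⟨X ^ (4 * p) - C 1, Polynomial.monic_X_pow_sub_C 1 (by omega), ?_⟩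
    simp [hξ4p]
  -- cast of xk
  set F := Finset.univ.filter (fun m : Fin k → (ZMod p)ˣ => ∏ i, ((m i : ZMod p)) = (r : ZMod p)) with hF
  have hx : ((xk k p (r : ZMod p) : ℝ) : ℂ) = ((p:ℂ))⁻¹ ^ k *
      ∑ m ∈ F, ∏ i, ((Real.cot (π * ((m i : ZMod p).val : ℝ) / p) : ℂ)) := by
    rw [xk, Complex.ofReal_mul, Complex.ofReal_pow, Complex.ofReal_inv, Complex.ofReal_natCast,
      Complex.ofReal_sum]
    congr 1
    exact Finset.sum_congr rfl fun m _ => Complex.ofReal_prod _ _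
  -- val facts
  have hval : ∀ (m : Fin k → (ZMod p)ˣ) (i : Fin k),
      0 < ((m i : ZMod p)).val ∧ ((m i : ZMod p)).val < p := by
    intro m i
    refine ⟨Nat.pos_of_ne_zero fun h => ?_, ZMod.val_lt _⟩
    exact Units.ne_zero (m i) ((ZMod.val_eq_zero _).mp h)
  have hcot : ∀ (m : Fin k → (ZMod p)ˣ) (i : Fin k),
      ((Real.cot (π * ((m i : ZMod p).val : ℝ) / p) : ℂ)) =
        Complex.I * (ζ ^ ((m i : ZMod p)).val + 1) / (ζ ^ ((m i : ZMod p)).val - 1) := by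
    intro m i
    rw [cot_formula _ p (hval m i).1 (hval m i).2, hζ, ← Complex.exp_nat_mul]
    congr 2 <;> · congr 1; field_simp
  have hpinv : ((p:ℂ))⁻¹ ^ k ∈ IntermediateField.adjoin ℚ {ζ} := by
    exact pow_mem (IntermediateField.inv_mem _ (IntermediateField.natCast_mem _ p)) k
  -- Part 1
  have part1 : Complex.I ^ k * ((xk k p (r : ZMod p) : ℝ) : ℂ) ∈ IntermediateField.adjoin ℚ {ζ} := by
    set K := IntermediateField.adjoin ℚ {ζ} with hKdef
    have hζK : ζ ∈ K := IntermediateField.mem_adjoin_simple_self ℚ ζ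
    have step : Complex.I ^ k * ((xk k p (r : ZMod p) : ℝ) : ℂ)
        = ((p:ℂ))⁻¹ ^ k * ∑ m ∈ F, ∏ i,
          (Complex.I * ((Real.cot (π * ((m i : ZMod p).val : ℝ) / p) : ℂ))) := by
      rw [hx, mul_left_comm, Finset.mul_sum]
      congr 1
      refine Finset.sum_congr rfl fun m _ => ?_
      rw [Finset.prod_mul_distrib, Finset.prod_const, Finset.card_univ, Fintype.card_fin]
    rw [step]
    refine K.mul_mem hpinv (sum_mem fun m _ => prod_mem fun i _ => ?_)
    rw [hcot m i]
    have hsimp : Complex.I * (Complex.I * (ζ ^ ((m i : ZMod p)).val + 1) / (ζ ^ ((m i : ZMod p)).val - 1))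
        = -((ζ ^ ((m i : ZMod p)).val + 1) / (ζ ^ ((m i : ZMod p)).val - 1)) := by
      rw [mul_div_assoc', ← mul_assoc, Complex.I_mul_I]
      ring
    rw [hsimp]
    exact K.neg_mem (K.div_mem (K.add_mem (pow_mem hζK _) K.one_mem)
      (K.sub_mem (pow_mem hζK _) K.one_mem))
  refine ⟨part1, ?_, ?_⟩
  · -- even case
    rintro ⟨t, ht⟩
    have hIk : Complex.I ^ k = (-1 : ℂ) ^ t := by
      rw [ht, pow_add, ← mul_pow, Complex.I_mul_I]
    have hxeq : ((xk k p (r : ZMod p) : ℝ) : ℂ)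
        = (-1:ℂ) ^ t * (Complex.I ^ k * ((xk k p (r : ZMod p) : ℝ) : ℂ)) := by
      rw [hIk, ← mul_assoc, ← mul_pow]
      norm_num
    have hmem : ((xk k p (r : ZMod p) : ℝ) : ℂ) ∈ IntermediateField.adjoin ℚ {ζ} := by
      rw [hxeq]
      exact mul_mem (pow_mem (neg_mem (IntermediateField.one_mem _)) t) part1
    exact real_mem ζ _ hζ0 hζi hζc hmem (Complex.conj_ofReal _)
  · -- odd case (holds for all k)
    intro _
    set K := IntermediateField.adjoin ℚ {ξ + ξ⁻¹} with hKdef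
    have hξK : ξ ∈ IntermediateField.adjoin ℚ {ξ} := IntermediateField.mem_adjoin_simple_self ℚ ξ
    have hfac : ∀ (m : Fin k → (ZMod p)ˣ) (i : Fin k),
        ((Real.cot (π * ((m i : ZMod p).val : ℝ) / p) : ℂ)) ∈ K := by
      intro m i
      refine real_mem ξ _ hξ0 hξi hξc ?_ (Complex.conj_ofReal _)
      rw [hcot m i, ← hξp, ← hξ4]
      rw [← pow_mul]
      exact IntermediateField.div_mem _
        (IntermediateField.mul_mem _ (pow_mem hξK p)
          (IntermediateField.add_mem _ (pow_mem hξK _) (IntermediateField.one_mem _)))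
        (IntermediateField.sub_mem _ (pow_mem hξK _) (IntermediateField.one_mem _))
    have hpinv' : ((p:ℂ))⁻¹ ^ k ∈ K :=
      pow_mem (IntermediateField.inv_mem _ (IntermediateField.natCast_mem _ p)) k
    rw [hx]
    exact K.mul_mem hpinv' (sum_mem fun m _ => prod_mem fun i _ => hfac m i)
end

section
/- Let p≥3 be prime, k∈ℕ, and for c coprime to p let σ_c be the automorphism of ℚ(ζ_p) sending ζ_p to ζ_p^c. Then σ_c(i^k·x_k(r;p)) = i^k·x_k(c^k·r; p) for all integers r. -/
open scoped Real

theorem stmt3 (p k : ℕ) [NeZero p] (hp : p.Prime) (hp3 : 3 ≤ p)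
    (c : ℤ) (hc : Int.gcd c p = 1)
    (K : IntermediateField ℚ ℂ)
    (hK : K = IntermediateField.adjoin ℚ {Complex.exp (2 * π * Complex.I / p)})
    (σ : K ≃ₐ[ℚ] K)
    (hζ : Complex.exp (2 * π * Complex.I / p) ∈ K)
    (hσ : (σ ⟨Complex.exp (2 * π * Complex.I / p), hζ⟩ : ℂ) =
      Complex.exp (2 * π * Complex.I / p) ^ c) :
    ∀ (r : ℤ) (hx : Complex.I ^ k * (xk k p (r : ZMod p) : ℂ) ∈ K),
      (σ ⟨Complex.I ^ k * (xk k p (r : ZMod p) : ℂ), hx⟩ : ℂ) =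
        Complex.I ^ k * (xk k p ((c ^ k * r : ℤ) : ZMod p) : ℂ) := by
  classical
  haveI : Fact p.Prime := ⟨hp⟩
  intro r hx
  set E : ℂ := Complex.exp (2 * π * Complex.I / p) with hE
  have hp0 : (p : ℂ) ≠ 0 := Nat.cast_ne_zero.mpr hp.ne_zero
  have hE0 : E ≠ 0 := Complex.exp_ne_zero _
  have hπ : (π : ℂ) ≠ 0 := Complex.ofReal_ne_zero.mpr Real.pi_ne_zero
  -- E ^ p = 1
  have hEp : E ^ p = 1 := by
    rw [hE, ← Complex.exp_nat_mul]
    rw [show (p : ℂ) * (2 * π * Complex.I / p) = 2 * π * Complex.I by field_simp]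
    exact Complex.exp_two_pi_mul_I
  -- E ^ a.val ≠ 1 for a ≠ 0
  have hEn : ∀ a : ZMod p, a ≠ 0 → E ^ (a.val) ≠ 1 := by
    intro a ha h1
    rw [hE, ← Complex.exp_nat_mul, Complex.exp_eq_one_iff] at h1
    obtain ⟨n, hn⟩ := h1
    have h2πI : (2 * (π : ℂ) * Complex.I) ≠ 0 := by
      simp [Real.pi_ne_zero, Complex.I_ne_zero]
    have hval : (a.val : ℂ) = n * p := by
      apply mul_right_cancel₀ h2πI
      field_simp at hn
      linear_combination (2 * (π : ℂ) * Complex.I) * hn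
    have h2 : (a.val : ℤ) = n * p := by exact_mod_cast hval
    have hdvd : p ∣ a.val := by
      exact_mod_cast (Dvd.intro n (by linarith) : (p : ℤ) ∣ (a.val : ℤ))
    have h0 : a.val ≠ 0 := fun h => ha ((ZMod.val_eq_zero a).mp h)
    exact absurd (Nat.le_of_dvd (Nat.pos_of_ne_zero h0) hdvd) (not_le.mpr (ZMod.val_lt a))
  -- the cotangent identity
  have hcot : ∀ a : ZMod p, a ≠ 0 →
      Complex.I * ((Real.cot (π * (a.val : ℝ) / p) : ℝ) : ℂ) =
        -((E ^ a.val + 1) / (E ^ a.val - 1)) := by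
    intro a ha
    have hne : E ^ a.val ≠ 1 := hEn a ha
    have hE2 : Complex.exp (2 * Complex.I * ((π * (a.val : ℝ) / p : ℝ) : ℂ)) = E ^ a.val := by
      rw [hE, ← Complex.exp_nat_mul]
      congr 1
      push_cast
      field_simp
    rw [Complex.ofReal_cot, Complex.cot_eq_exp_ratio, hE2]
    have hne' : E ^ a.val - 1 ≠ 0 := sub_ne_zero.mpr hne
    have hne'' : 1 - E ^ a.val ≠ 0 := fun h => hne (by linear_combination -h)
    field_simp
    ring
  -- elements of K
  set kζ : K := ⟨E, hζ⟩ with hkζ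
  have hkζp : kζ ^ p = 1 := by
    apply Subtype.ext
    push_cast
    exact hEp
  have hmodK : ∀ m : ℕ, kζ ^ m = kζ ^ (m % p) := by
    intro m
    conv_lhs => rw [← Nat.div_add_mod m p]
    rw [pow_add, pow_mul, hkζp, one_pow, one_mul]
  set Fa : ZMod p → K := fun a => -((kζ ^ a.val + 1) / (kζ ^ a.val - 1)) with hFa
  have hFac : ∀ a : ZMod p, ((Fa a : K) : ℂ) = -((E ^ a.val + 1) / (E ^ a.val - 1)) := by
    intro a
    rw [hFa]
    push_cast [div_eq_mul_inv, IntermediateField.coe_inv]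
    ring
  -- σ kζ = kζ ^ (c mod p)
  have hcval : (((c : ZMod p)).val : ℤ) = c % p := ZMod.val_intCast c
  have hEzc : E ^ c = E ^ ((c : ZMod p)).val := by
    have h1 : E ^ c = E ^ (p * (c / p) + c % p) := by
      rw [Int.mul_ediv_add_emod]
    rw [h1, zpow_add₀ hE0, zpow_mul, show E ^ (p : ℤ) = 1 by
      rw [zpow_natCast, hEp], one_zpow, one_mul, ← hcval, zpow_natCast]
  have hσkζ : σ kζ = kζ ^ ((c : ZMod p)).val := by
    apply Subtype.ext
    push_cast
    rw [show ((σ kζ : K) : ℂ) = E ^ c from hσ]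
    exact hEzc
  -- σ acts on Fa by multiplying the index by c
  have hσFa : ∀ a : ZMod p, σ (Fa a) = Fa ((c : ZMod p) * a) := by
    intro a
    rw [hFa]
    simp only [map_neg, map_div₀, map_add, map_sub, map_pow, map_one, hσkζ]
    rw [← pow_mul, hmodK (((c : ZMod p)).val * a.val), ← ZMod.val_mul]
  -- the element X s of K
  set X : ZMod p → K := fun s =>
    ((p : K))⁻¹ ^ k *
      ∑ m ∈ Finset.univ.filter (fun m : Fin k → (ZMod p)ˣ => ∏ i, ((m i : ZMod p)) = s),
        ∏ i, Fa ((m i : ZMod p)) with hX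
  have hXcoe : ∀ s : ZMod p, ((X s : K) : ℂ) = Complex.I ^ k * (xk k p s : ℂ) := by
    intro s
    have hterm : ∀ m : Fin k → (ZMod p)ˣ,
        (∏ i, ((Fa ((m i : ZMod p)) : K) : ℂ)) =
          Complex.I ^ k * ∏ i, ((Real.cot (π * (((m i : ZMod p)).val : ℝ) / p) : ℝ) : ℂ) := by
      intro m
      have h1 : ∀ i : Fin k, ((Fa ((m i : ZMod p)) : K) : ℂ) =
          Complex.I * ((Real.cot (π * (((m i : ZMod p)).val : ℝ) / p) : ℝ) : ℂ) := by
        intro i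
        rw [hFac, ← hcot _ ((m i).ne_zero)]
      rw [Finset.prod_congr rfl (fun i _ => h1 i), Finset.prod_mul_distrib,
        Finset.prod_const, Finset.card_univ, Fintype.card_fin]
    rw [hX]
    simp only [xk]
    push_cast [IntermediateField.coe_inv]
    rw [Finset.sum_congr rfl (fun m _ => hterm m), ← Finset.mul_sum]
    push_cast
    ring
  -- the unit c in ZMod p
  have hcne : ((c : ZMod p)) ≠ 0 := by
    rw [Ne, ZMod.intCast_zmod_eq_zero_iff_dvd]
    intro hdvd
    have h1 : (p : ℤ) ∣ (Int.gcd c p : ℤ) := Int.dvd_coe_gcd hdvd (dvd_refl _)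
    rw [hc] at h1
    have := Int.le_of_dvd one_pos h1
    omega
  have hcu : IsUnit ((c : ZMod p)) := isUnit_iff_ne_zero.mpr hcne
  set cu : (ZMod p)ˣ := hcu.unit with hcud
  have hcuv : ((cu : (ZMod p)ˣ) : ZMod p) = (c : ZMod p) := hcu.unit_spec
  -- σ acts on X
  have hσX : ∀ s : ZMod p, σ (X s) = X ((c : ZMod p) ^ k * s) := by
    intro s
    rw [hX]
    simp only [map_mul, map_pow, map_inv₀, map_natCast, map_sum, map_prod, hσFa]
    congr 1
    refine Finset.sum_nbij' (fun m => fun j => cu * m j) (fun n => fun j => cu⁻¹ * n j)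
      ?_ ?_ ?_ ?_ ?_
    · intro m hm
      simp only [Finset.mem_filter, Finset.mem_univ, true_and] at hm ⊢
      simp only [Units.val_mul, hcuv, Finset.prod_mul_distrib, Finset.prod_const,
        Finset.card_univ, Fintype.card_fin, hm]
    · intro n hn
      simp only [Finset.mem_filter, Finset.mem_univ, true_and] at hn ⊢
      simp only [Units.val_mul, Finset.prod_mul_distrib, Finset.prod_const,
        Finset.card_univ, Fintype.card_fin, hn]
      rw [← hcuv, ← mul_assoc, ← mul_pow, Units.inv_mul, one_pow, one_mul]
    · intro m _
      funext j
      show cu⁻¹ * (cu * m j) = m j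
      rw [inv_mul_cancel_left]
    · intro n _
      funext j
      show cu * (cu⁻¹ * n j) = n j
      rw [mul_inv_cancel_left]
    · intro m _
      refine Finset.prod_congr rfl fun i _ => ?_
      rw [Units.val_mul, hcuv]
  -- finish
  have hval : (⟨Complex.I ^ k * ((xk k p ((r : ℤ) : ZMod p) : ℝ) : ℂ), hx⟩ : K)
      = X ((r : ℤ) : ZMod p) := Subtype.ext (hXcoe _).symm
  have harg : ((c : ZMod p)) ^ k * ((r : ℤ) : ZMod p) = (((c ^ k * r : ℤ)) : ZMod p) := by
    push_cast
    ring
  rw [hval, hσX, harg, hXcoe]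
end

section
/- Let p be prime, k∈ℕ, and H the unique subgroup of order gcd(k,p-1) of Gal(ℚ(ζ_p)/ℚ) ≅ (ℤ/pℤ)*. Then i^k·x_k(r;p) lies in the fixed field ℚ(ζ_p)^H for every integer r. -/
open scoped Real

lemma cot_aux (p n : ℕ) (hn0 : 0 < n) (hnp : n < p)
    (hzn : Complex.exp (2 * ↑π * Complex.I / p) ^ n ≠ 1) :
    Complex.I * ((Real.cot (π * n / p) : ℝ) : ℂ) =
      (1 + Complex.exp (2 * ↑π * Complex.I / p) ^ n) *
        (1 - Complex.exp (2 * ↑π * Complex.I / p) ^ n)⁻¹ := by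
  have hp0 : 0 < p := lt_trans hn0 hnp
  have hp0R : (0:ℝ) < p := by exact_mod_cast hp0
  set θ : ℝ := π * n / p with hθ
  have hθ0 : 0 < θ := by
    apply div_pos _ hp0R
    have hn : (0:ℝ) < n := by exact_mod_cast hn0
    positivity
  have hθπ : θ < π := by
    rw [hθ, div_lt_iff₀ hp0R]
    have hnR : (n:ℝ) < p := by exact_mod_cast hnp
    exact mul_lt_mul_of_pos_left hnR Real.pi_pos
  have hs : Real.sin θ ≠ 0 := ne_of_gt (Real.sin_pos_of_pos_of_lt_pi hθ0 hθπ)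
  have hsC : Complex.sin (θ : ℂ) ≠ 0 := by
    rw [← Complex.ofReal_sin]
    exact_mod_cast hs
  set X : ℂ := Complex.exp ((θ : ℂ) * Complex.I) with hX
  have hXne : X ≠ 0 := Complex.exp_ne_zero _
  have hE : Complex.exp (2 * ↑π * Complex.I / p) ^ n = X ^ 2 := by
    rw [hX, ← Complex.exp_nat_mul, ← Complex.exp_nat_mul]
    congr 1
    have hpC : (p : ℂ) ≠ 0 := by exact_mod_cast hp0.ne'
    push_cast [hθ]
    field_simp
  have hden : (1 : ℂ) - X ^ 2 ≠ 0 := by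
    rw [← hE]
    exact sub_ne_zero.mpr fun h => hzn h.symm
  rw [hE]
  have hcos : Complex.cos (θ : ℂ) = (X + X⁻¹) / 2 := by
    rw [Complex.cos, hX, ← Complex.exp_neg]
    ring_nf
  have hsin : Complex.sin (θ : ℂ) = (X⁻¹ - X) * Complex.I / 2 := by
    rw [Complex.sin, hX, ← Complex.exp_neg]
    ring_nf
  have key : Complex.I * Complex.cos (θ : ℂ) * (1 - X ^ 2) =
      (1 + X ^ 2) * Complex.sin (θ : ℂ) := by
    rw [hcos, hsin]
    field_simp
    ring
  rw [Real.cot_eq_cos_div_sin]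
  push_cast
  rw [mul_div_assoc', ← div_eq_mul_inv, div_eq_div_iff hsC hden]
  linear_combination key

set_option maxHeartbeats 1000000 in
set_option synthInstance.maxHeartbeats 400000 in
theorem stmt4 (p k : ℕ) [NeZero p] (hp : p.Prime) (r : ℤ)
    (K : IntermediateField ℚ ℂ)
    (hK : K = IntermediateField.adjoin ℚ {Complex.exp (2 * π * Complex.I / p)})
    (H : Subgroup (K ≃ₐ[ℚ] K)) (hH : Nat.card H = Nat.gcd k (p - 1))
    (hx : Complex.I ^ k * (xk k p (r : ZMod p) : ℂ) ∈ K) :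
    (⟨Complex.I ^ k * (xk k p (r : ZMod p) : ℂ), hx⟩ : K) ∈
      IntermediateField.fixedField H := by
  haveI : Fact p.Prime := ⟨hp⟩
  have hp0 : p ≠ 0 := NeZero.ne p
  set ζ : ℂ := Complex.exp (2 * ↑π * Complex.I / p) with hζdef
  have hζ : IsPrimitiveRoot ζ p := Complex.isPrimitiveRoot_exp p hp0
  have hζK : ζ ∈ K := by
    rw [hK]; exact IntermediateField.subset_adjoin _ _ rfl
  set z : K := ⟨ζ, hζK⟩ with hzdef
  have hmapz : algebraMap K ℂ z = ζ := rfl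
  have hzprim : IsPrimitiveRoot z p := by
    apply IsPrimitiveRoot.of_map_of_injective (f := algebraMap K ℂ)
    · rw [hmapz]; exact hζ
    · exact (algebraMap K ℂ).injective
  set e : (ZMod p)ˣ → ℕ := fun u => ((u : ZMod p)).val with hedef
  have he0 : ∀ u, 0 < e u := fun u => ZMod.val_pos.mpr (Units.ne_zero u)
  have hep : ∀ u, e u < p := fun u => ZMod.val_lt _
  set S : Finset (Fin k → (ZMod p)ˣ) :=
    Finset.univ.filter (fun m : Fin k → (ZMod p)ˣ => ∏ i, ((m i : ZMod p)) = (r : ZMod p))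
    with hSdef
  set y : K := ((p : K))⁻¹ ^ k *
      ∑ m ∈ S, ∏ i, (1 + z ^ e (m i)) * (1 - z ^ e (m i))⁻¹ with hydef
  -- step A : the element equals y
  have hAy : (⟨Complex.I ^ k * (xk k p (r : ZMod p) : ℂ), hx⟩ : K) = y := by
    apply Subtype.ext
    show _ = algebraMap K ℂ y
    rw [hydef]
    rw [map_mul, map_pow, map_inv₀, map_natCast, map_sum]
    simp only [map_prod, map_mul, map_add, map_sub, map_one, map_pow, map_inv₀, hmapz]
    rw [xk]
    rw [← Complex.ofRealHom_eq_coe, map_mul, map_pow, map_inv₀, map_natCast, map_sum]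
    simp only [map_prod, Complex.ofRealHom_eq_coe]
    rw [← hSdef, Finset.mul_sum, Finset.mul_sum, Finset.mul_sum]
    apply Finset.sum_congr rfl
    intro m _
    rw [mul_left_comm]
    congr 1
    have : (Complex.I : ℂ) ^ k = ∏ _i : Fin k, Complex.I := by
      simp [Finset.prod_const]
    rw [this, ← Finset.prod_mul_distrib]
    apply Finset.prod_congr rfl
    intro i _
    exact cot_aux p (e (m i)) (he0 _) (hep _) (by
      intro h
      rw [hζ.pow_eq_one_iff_dvd] at h
      exact absurd (Nat.le_of_dvd (he0 _) h) (not_le.mpr (hep _)))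
  rw [hAy]
  -- step B : y is fixed by H
  intro g
  rw [Subgroup.smul_def, AlgEquiv.smul_def]
  obtain ⟨σ, hσ⟩ := g
  -- σ ^ k = 1
  have h2p : 2 ≤ p := hp.two_le
  have hcard : Nat.card H ≠ 0 := by
    rw [hH]
    intro h
    rcases Nat.gcd_eq_zero_iff.mp h with ⟨_, h2'⟩
    omega
  haveI : Finite H := Nat.finite_of_card_ne_zero hcard
  have hσcard : σ ^ Nat.card H = 1 := by
    have h1 : (⟨σ, hσ⟩ : H) ^ Nat.card H = 1 := pow_card_eq_one'
    have h2 : (((⟨σ, hσ⟩ : H) ^ Nat.card H : H) : K ≃ₐ[ℚ] K) = ((1 : H) : K ≃ₐ[ℚ] K) := by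
      rw [h1]
    rwa [SubgroupClass.coe_pow, OneMemClass.coe_one] at h2
  have hσk : σ ^ k = 1 := by
    obtain ⟨c, hc⟩ : Nat.gcd k (p - 1) ∣ k := Nat.gcd_dvd_left _ _
    rw [hc, pow_mul, ← hH, hσcard, one_pow]
  -- the corresponding unit
  set a : (ZMod p)ˣ := hzprim.autToPow ℚ σ with hadef
  have hspec : z ^ ((a : ZMod p)).val = σ z := hzprim.autToPow_spec ℚ σ
  have hak : a ^ k = 1 := by
    rw [hadef, ← map_pow, hσk, map_one]
  -- compute σ y
  show σ y = y
  rw [hydef]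
  rw [map_mul, map_pow, map_inv₀, map_natCast, map_sum]
  simp only [map_prod, map_mul, map_add, map_sub, map_one, map_pow, map_inv₀]
  congr 1
  have hzmod : ∀ n : ℕ, z ^ n = z ^ (n % p) := by
    intro n
    conv_lhs => rw [← Nat.div_add_mod n p]
    rw [pow_add, pow_mul, hzprim.pow_eq_one, one_pow, one_mul]
  have hpow : ∀ u : (ZMod p)ˣ, (σ z) ^ e u = z ^ e (a * u) := by
    intro u
    rw [← hspec, ← pow_mul, hzmod]
    congr 1
    show ((a : ZMod p)).val * ((u : ZMod p)).val % p = (((a * u : (ZMod p)ˣ) : ZMod p)).val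
    rw [Units.val_mul, ZMod.val_mul]
  simp only [hpow]
  -- reindex the sum
  have hmem : ∀ (b : (ZMod p)ˣ), b ^ k = 1 → ∀ m ∈ S, (fun j => b * m j) ∈ S := by
    intro b hb m hm
    rw [hSdef, Finset.mem_filter] at hm ⊢
    refine ⟨Finset.mem_univ _, ?_⟩
    simp only [Units.val_mul]
    rw [Finset.prod_mul_distrib, Finset.prod_const, hm.2]
    have : ((b : ZMod p)) ^ (Finset.univ : Finset (Fin k)).card = ((b ^ k : (ZMod p)ˣ) : ZMod p) := by
      rw [Units.val_pow_eq_pow_val]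
      congr 1
      simp
    rw [this, hb, Units.val_one, one_mul]
  refine Finset.sum_nbij' (fun m => fun j => a * m j) (fun m => fun j => a⁻¹ * m j)
    (hmem a hak) (hmem a⁻¹ (by rw [inv_pow, hak, inv_one])) ?_ ?_ ?_
  · intro m _; funext j; simp [mul_assoc]
  · intro m _; funext j; simp [mul_assoc]
  · intro m _; rfl
end

section
/- Let m≥1 and v=(v_0,...,v_{m-1})∈ℂ^m. Let A_-(v) be the m×m matrix with (i,j)-entry (0-indexed) equal to v_{i+j} if i+j<m and -v_{i+j-m} if i+j≥m (the skew-circulant Hankel-type matrix). Then det(A_-(v)) = (sin(πm/2) + cos(πm/2)) · Π_{ℓ odd, 0≤ℓ<2m} (Σ_{j=0}^{m-1} v_j ζ_{2m}^{jℓ}), where ζ_{2m} = e^{πi/m}. -/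
open scoped Real
open Equiv

lemma rotate_mul_rev (n : ℕ) :
    finRotate (n+1) * (Fin.revPerm : Perm (Fin (n+1))) =
      Equiv.Perm.decomposeFin.symm (0, (Fin.revPerm : Perm (Fin n))) := by
  ext i
  refine Fin.cases ?_ (fun x => ?_) i
  · simp [Fin.rev_zero]
  · simp only [Perm.mul_apply, Fin.revPerm_apply, Equiv.Perm.decomposeFin_symm_apply_succ,
      swap_self, Equiv.refl_apply, finRotate_succ_apply]
    have hx := x.is_lt
    have h1 : (x.succ.rev : ℕ) + 1 < n + 1 := by
      simp [Fin.val_rev]; omega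
    rw [Fin.val_add, Fin.val_one', Nat.add_mod_mod, Nat.mod_eq_of_lt (by simpa using h1)]
    simp only [Fin.val_succ, Fin.val_rev]
    omega

lemma sign_revPerm : ∀ n : ℕ, Equiv.Perm.sign (Fin.revPerm : Perm (Fin n)) = (-1) ^ (n * (n-1) / 2)
  | 0 => by simp [Subsingleton.elim (Fin.revPerm : Perm (Fin 0)) 1]
  | (n+1) => by
    have h := congrArg Equiv.Perm.sign (rotate_mul_rev n)
    rw [map_mul, Equiv.Perm.decomposeFin.symm_sign, sign_finRotate, sign_revPerm n] at h
    simp only [if_pos rfl, one_mul] at h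
    have hexp : (n+1) * ((n+1)-1) / 2 = n * (n-1) / 2 + n := by
      cases n with
      | zero => rfl
      | succ k =>
        simp only [Nat.add_sub_cancel]
        have : (k+2) * (k+1) = (k+1) * k + 2 * (k+1) := by ring
        rw [this, Nat.add_mul_div_left _ _ (by norm_num : (0:ℕ) < 2)]
    have h2 : Equiv.Perm.sign (Fin.revPerm : Perm (Fin (n+1)))
        = (-1) ^ n * (-1) ^ (n * (n-1) / 2) := by
      have := congrArg (fun z => ((-1:ℤˣ))^n * z) h
      simpa [← mul_assoc, ← pow_add, ← two_mul, pow_mul] using this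
    rw [h2, hexp, pow_add, mul_comm]

lemma trig_aux : ∀ m : ℕ, Real.sin (π * m / 2) + Real.cos (π * m / 2) = (-1) ^ (m * (m-1) / 2)
  | 0 => by norm_num
  | 1 => by norm_num [Real.sin_pi_div_two, Real.cos_pi_div_two]
  | 2 => by norm_num [Real.sin_pi, Real.cos_pi]
  | 3 => by
    have h : π * (3:ℕ) / 2 = π + π / 2 := by push_cast; ring
    rw [h, Real.sin_add, Real.cos_add]
    norm_num [Real.sin_pi, Real.cos_pi, Real.sin_pi_div_two, Real.cos_pi_div_two]
  | (k+4) => by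
    have h : π * (k+4 : ℕ) / 2 = π * k / 2 + 2 * π := by push_cast; ring
    rw [h, Real.sin_add_two_pi, Real.cos_add_two_pi, trig_aux k]
    have h1 : (k+4) * ((k+4)-1) = k*(k-1) + 2*(2*(2*k+3)) := by
      cases k with
      | zero => rfl
      | succ j =>
        show (j+5) * (j+5-1) = (j+1)*(j+1-1) + 2*(2*(2*(j+1)+3))
        simp only [show j+5-1 = j+4 from rfl, show j+1-1 = j from rfl]
        ring
    have hexp : (k+4) * ((k+4)-1) / 2 = k * (k-1) / 2 + 2*(2*k+3) := by
      rw [h1, Nat.add_mul_div_left _ _ (by norm_num : (0:ℕ) < 2)]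
    rw [hexp, pow_add, pow_mul]
    norm_num

theorem stmt12 (m : ℕ) (hm : 1 ≤ m) (v : Fin m → ℂ)
    (A : Matrix (Fin m) (Fin m) ℂ)
    (hA : ∀ i j : Fin m,
      (if h : (i : ℕ) + (j : ℕ) < m then A i j = v ⟨(i : ℕ) + (j : ℕ), h⟩
       else ∀ h' : (i : ℕ) + (j : ℕ) - m < m, A i j = -v ⟨(i : ℕ) + (j : ℕ) - m, h'⟩)) :
    A.det = ((Real.sin (π * m / 2) + Real.cos (π * m / 2) : ℝ) : ℂ) *
      ∏ l ∈ (Finset.range (2 * m)).filter (fun l => Odd l), ∑ j : Fin m,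
        v j * Complex.exp (2 * π * Complex.I / (2 * m)) ^ ((j : ℕ) * l) := by
  haveI : NeZero m := ⟨by omega⟩
  set ζ : ℂ := Complex.exp (2 * π * Complex.I / (2 * m)) with hζdef
  have hprim : IsPrimitiveRoot ζ (2*m) := by
    have h := Complex.isPrimitiveRoot_exp (2*m) (by omega)
    convert h using 3
    push_cast; ring
  have hζ2m : ζ ^ (2*m) = 1 := hprim.pow_eq_one
  have hζne : ζ ≠ 0 := Complex.exp_ne_zero _
  have hζm : ζ ^ m = -1 := by
    rw [hζdef, ← Complex.exp_nat_mul,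
      show (m:ℂ) * (2 * π * Complex.I / (2 * m)) = π * Complex.I by
        have : (m:ℂ) ≠ 0 := Nat.cast_ne_zero.2 (by omega)
        field_simp]
    exact Complex.exp_pi_mul_I
  set x : Fin m → ℂ := fun k => ζ ^ (2*(k:ℕ)+1) with hxdef
  set f : Fin m → ℂ := fun k => ∑ j : Fin m, v j * x k ^ (j:ℕ) with hfdef
  set V : Matrix (Fin m) (Fin m) ℂ := (Matrix.vandermonde x).transpose with hVdef
  set W : Matrix (Fin m) (Fin m) ℂ := V.submatrix id (fun p => (Fin.revPerm : Perm (Fin m)) p) with hWdef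
  -- key identity
  have hkey : A * V = W * Matrix.diagonal f := by
    ext i k
    rw [Matrix.mul_apply, Matrix.mul_diagonal]
    simp only [hWdef, hVdef, Matrix.submatrix_apply, Matrix.transpose_apply,
      Matrix.vandermonde_apply, id_eq, Fin.revPerm_apply, hxdef]
    set ℓ : ℕ := 2*(k:ℕ)+1 with hℓdef
    apply mul_right_cancel₀ (pow_ne_zero ((i:ℕ)*ℓ) hζne)
    have hterm : ∀ j : Fin m, A i j * (ζ^ℓ)^(j:ℕ) * ζ^((i:ℕ)*ℓ)
        = v (i+j) * ζ^(((i+j : Fin m):ℕ)*ℓ) := by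
      intro j
      have hv : ((i+j : Fin m):ℕ) = ((i:ℕ)+(j:ℕ)) % m := Fin.val_add i j
      have hAij := hA i j
      by_cases h : (i:ℕ)+(j:ℕ) < m
      · rw [dif_pos h] at hAij
        have ht : (i+j : Fin m) = ⟨(i:ℕ)+(j:ℕ), h⟩ :=
          Fin.ext (by rw [hv]; exact Nat.mod_eq_of_lt h)
        rw [hAij, ht, mul_assoc, ← pow_mul, ← pow_add]
        congr 2
        ring
      · rw [dif_neg h] at hAij
        push_neg at h
        have h2 : (i:ℕ)+(j:ℕ) - m < m := by have := i.is_lt; have := j.is_lt; omega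
        rw [hAij h2]
        have ht : (i+j : Fin m) = ⟨(i:ℕ)+(j:ℕ) - m, h2⟩ :=
          Fin.ext (by rw [hv, Nat.mod_eq_sub_mod h, Nat.mod_eq_of_lt h2])
        rw [ht]
        have hsplit : ζ ^ (ℓ*(j:ℕ) + (i:ℕ)*ℓ) = - ζ^(((i:ℕ)+(j:ℕ)-m)*ℓ) := by
          have hexp : ℓ*(j:ℕ) + (i:ℕ)*ℓ = ((i:ℕ)+(j:ℕ)-m)*ℓ + m*ℓ := by
            have hsm : ((i:ℕ)+(j:ℕ)-m) + m = (i:ℕ)+(j:ℕ) := by omega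
            calc ℓ*(j:ℕ) + (i:ℕ)*ℓ = ((i:ℕ)+(j:ℕ))*ℓ := by ring
              _ = (((i:ℕ)+(j:ℕ)-m) + m)*ℓ := by rw [hsm]
              _ = ((i:ℕ)+(j:ℕ)-m)*ℓ + m*ℓ := add_mul _ _ _
          rw [hexp, pow_add, pow_mul ζ m ℓ, hζm, Odd.neg_one_pow (odd_two_mul_add_one _)]
          ring
        rw [mul_assoc, ← pow_mul, ← pow_add, hsplit]
        ring
    calc (∑ j : Fin m, A i j * (ζ^ℓ)^(j:ℕ)) * ζ^((i:ℕ)*ℓ)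
        = ∑ j : Fin m, v (i+j) * ζ^(((i+j : Fin m):ℕ)*ℓ) := by
          rw [Finset.sum_mul]
          exact Finset.sum_congr rfl (fun j _ => hterm j)
      _ = ∑ t : Fin m, v t * ζ^((t:ℕ)*ℓ) :=
          Fintype.sum_equiv (Equiv.addLeft i) _ _ (fun j => rfl)
      _ = (ζ^(2*((Fin.rev k : Fin m):ℕ)+1))^(i:ℕ) * (∑ j : Fin m, v j * (ζ^ℓ)^(j:ℕ)) * ζ^((i:ℕ)*ℓ) := by
          have ha : (2*((Fin.rev k : Fin m):ℕ)+1) + ℓ = 2*m := by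
            rw [Fin.val_rev]; have := k.is_lt; omega
          have hone : (ζ^(2*((Fin.rev k : Fin m):ℕ)+1))^(i:ℕ) * ζ^((i:ℕ)*ℓ) = 1 := by
            rw [← pow_mul, ← pow_add,
              show (2*((Fin.rev k : Fin m):ℕ)+1)*(i:ℕ) + (i:ℕ)*ℓ
                = (2*m)*(i:ℕ) from by rw [← ha]; ring,
              pow_mul, hζ2m, one_pow]
          rw [mul_right_comm, hone, one_mul]
          exact Finset.sum_congr rfl (fun j _ => by rw [← pow_mul, mul_comm ℓ (j:ℕ)])
  -- determinants
  have hdets := congrArg Matrix.det hkey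
  rw [Matrix.det_mul, Matrix.det_mul, Matrix.det_diagonal] at hdets
  have hWdet : W.det = ((Equiv.Perm.sign (Fin.revPerm : Perm (Fin m)) : ℤ) : ℂ) * V.det :=
    Matrix.det_permute' _ _
  have hVne : V.det ≠ 0 := by
    rw [hVdef, Matrix.det_transpose, Matrix.det_vandermonde]
    refine Finset.prod_ne_zero_iff.2 (fun a _ => Finset.prod_ne_zero_iff.2 (fun b hb => ?_))
    refine sub_ne_zero.2 (fun heq => ?_)
    have hab : a < b := Finset.mem_Ioi.1 hb
    have := hprim.pow_inj (by have := b.is_lt; omega) (by have := a.is_lt; omega) heq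
    omega
  have hAdet : A.det = ((Equiv.Perm.sign (Fin.revPerm : Perm (Fin m)) : ℤ) : ℂ) * ∏ k, f k := by
    apply mul_right_cancel₀ hVne
    rw [hdets, hWdet]; ring
  -- assemble
  have hconst : ((Real.sin (π * m / 2) + Real.cos (π * m / 2) : ℝ) : ℂ)
      = ((Equiv.Perm.sign (Fin.revPerm : Perm (Fin m)) : ℤ) : ℂ) := by
    rw [trig_aux m, sign_revPerm m]
    push_cast
    norm_num
  have hprod : ∏ l ∈ (Finset.range (2 * m)).filter (fun l => Odd l),
      (∑ j : Fin m, v j * ζ ^ ((j : ℕ) * l)) = ∏ k : Fin m, f k := by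
    have himg : (Finset.range (2 * m)).filter (fun l => Odd l)
        = (Finset.range m).image (fun k => 2*k+1) := by
      ext l
      simp only [Finset.mem_filter, Finset.mem_range, Finset.mem_image]
      constructor
      · rintro ⟨hl, c, hc⟩
        exact ⟨c, by omega, by omega⟩
      · rintro ⟨c, hc, rfl⟩
        exact ⟨by omega, c, by omega⟩
    rw [himg, Finset.prod_image (fun a _ b _ h => by omega),
      ← Fin.prod_univ_eq_prod_range (fun l => ∑ j : Fin m, v j * ζ ^ ((j : ℕ) * (2*l+1))) m]
    refine Finset.prod_congr rfl (fun k _ => ?_)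
    rw [hfdef]
    refine Finset.sum_congr rfl (fun j _ => ?_)
    rw [hxdef, ← pow_mul, Nat.mul_comm (2*(k:ℕ)+1) (j:ℕ)]
  rw [hAdet, hconst, hprod]
end
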